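/- Let {X_ℓ, f_ℓ} and {Y_ℓ, g_ℓ} be inverse sequences of compact metric spaces with surjective continuous bonding functions, let (n_ℓ) and (m_ℓ) be sequences of positive integers with m_{k+1} ≥ m_k, n_{k+1} > n_k, and m_k ≥ n_k for each k, and let (H_ℓ) be a sequence of upper semicontinuous set-valued functions H_ℓ : X_{m_ℓ} ⊸ Y_{n_ℓ} such that: (a) for each positive integer k, each j ∈ {1, …, n_k}, each positive integer r > k and each x ∈ X_{m_r}, g_{j,n_r}(H_r(x)) ⊆ g_{j,n_k}(H_k(f_{m_k,m_r}(x))); (b) for each positive integer j and each x ∈ varprojlim{X_ℓ, f_ℓ}, lim_{k→∞} diam(g_{j,n_k}(H_k(p_{m_k}(x)))) = 0; and (c) the graph of each H_k is surjective. Then there is a continuous surjection g : varprojlim{X_ℓ, f_ℓ} → varprojlim{Y_ℓ, g_ℓ} such that for each positive integer k, each j ∈ {1, …, n_k}, and each x ∈ varprojlim{X_ℓ, f_ℓ}, q_j(g(x)) ∈ g_{j,n_k}(H_k(p_{m_k}(x))). -/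
import Mathlib


open Metric Filter Set Function

/-- The inverse limit of an inverse sequence `{X n, f n}` of spaces with
single-valued bonding maps `f n : X (n+1) → X n`. -/
def invLim (X : ℕ → Type*) (f : ∀ n, X (n + 1) → X n) : Set (∀ n, X n) :=
  {x | ∀ n, x n = f n (x (n + 1))}

/-- The composite bonding map `f_{n,m} : X m → X n` for `n ≤ m`. -/
def bondMap {X : ℕ → Type*} (f : ∀ n, X (n + 1) → X n) {n m : ℕ} (h : n ≤ m) :
    X m → X n :=
  Nat.leRecOn (C := fun k => X k → X n) h (fun {k} g => g ∘ f k) id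

/-- A set-valued function is upper semicontinuous (with nonempty closed values):
all of its values are nonempty closed sets and its graph is closed. -/
def IsUSC {A B : Type*} [TopologicalSpace A] [TopologicalSpace B] (F : A → Set B) : Prop :=
  (∀ a, (F a).Nonempty) ∧ (∀ a, IsClosed (F a)) ∧ IsClosed {p : A × B | p.2 ∈ F p.1}

/-- The `T_{n,m}` transformation of a map between inverse limits:
`T_{n,m}(g)(x) = q_n (g (p_m ⁻¹ x))`. -/
def Ttrans {X Y : ℕ → Type*} {f : ∀ n, X (n + 1) → X n} {gs : ∀ n, Y (n + 1) → Y n}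
    (g : ↥(invLim X f) → ↥(invLim Y gs)) (n m : ℕ) (x : X m) : Set (Y n) :=
  {y | ∃ z : ↥(invLim X f), z.1 m = x ∧ (g z).1 n = y}

/-- A space has the fixed point property if every continuous self-map has a fixed point. -/
def HasFPP (Z : Type*) [TopologicalSpace Z] : Prop :=
  ∀ g : Z → Z, Continuous g → ∃ p, g p = p

theorem bondMap_self {X : ℕ → Type*} (f : ∀ n, X (n + 1) → X n) {n : ℕ} (h : n ≤ n) :
    bondMap f h = id := Nat.leRecOn_self _

theorem bondMap_succ {X : ℕ → Type*} (f : ∀ n, X (n + 1) → X n) {n m : ℕ}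
    (h1 : n ≤ m) (h2 : n ≤ m + 1) : bondMap f h2 = bondMap f h1 ∘ f m :=
  Nat.leRecOn_succ (C := fun k => X k → X n) h1 _

theorem bondMap_le_succ {X : ℕ → Type*} (f : ∀ n, X (n + 1) → X n) {n : ℕ} :
    bondMap f (Nat.le_succ n) = f n := by
  rw [bondMap_succ f le_rfl, bondMap_self]; rfl

theorem bondMap_comp {X : ℕ → Type*} (f : ∀ n, X (n + 1) → X n) {a b c : ℕ}
    (h1 : a ≤ b) (h2 : b ≤ c) :
    bondMap f h1 ∘ bondMap f h2 = bondMap f (h1.trans h2) := by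
  induction c, h2 using Nat.le_induction with
  | base => rw [bondMap_self]; rfl
  | succ c hc ih =>
      rw [bondMap_succ f hc, bondMap_succ f (h1.trans hc), ← ih]
      rfl

theorem bondMap_continuous {X : ℕ → Type*} [∀ n, TopologicalSpace (X n)]
    (f : ∀ n, X (n + 1) → X n) (hfc : ∀ n, Continuous (f n)) {n m : ℕ} (h : n ≤ m) :
    Continuous (bondMap f h) := by
  induction m, h using Nat.le_induction with
  | base => rw [bondMap_self]; exact continuous_id
  | succ m hm ih => rw [bondMap_succ f hm]; exact ih.comp (hfc m)

theorem invLim_thread {X : ℕ → Type*} {f : ∀ n, X (n + 1) → X n} {z : ∀ n, X n}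
    (hz : z ∈ invLim X f) {n m : ℕ} (h : n ≤ m) : z n = bondMap f h (z m) := by
  induction m, h using Nat.le_induction with
  | base => rw [bondMap_self]; rfl
  | succ m hm ih =>
      rw [bondMap_succ f hm]
      simpa [← hz m] using ih

theorem invLim_proj_surj {X : ℕ → Type*} (f : ∀ n, X (n + 1) → X n)
    (hfs : ∀ n, Surjective (f n)) (m : ℕ) (x : X m) :
    ∃ z ∈ invLim X f, z m = x := by
  choose pre hpre using hfs
  let s : ∀ k, X (m + k) := fun k => Nat.rec x (fun k sk => pre (m + k) sk) k
  have hs : ∀ k, f (m + k) (s (k + 1)) = s k := fun k => hpre _ _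
  have hsx : ∀ k, bondMap f (Nat.le_add_right m k) (s k) = x := by
    intro k
    induction k with
    | zero => rw [bondMap_self]; rfl
    | succ k ih =>
        rw [bondMap_succ f (Nat.le_add_right m k), comp_apply, hs k, ih]
  refine ⟨fun n => bondMap f (Nat.le_add_left n m) (s n), fun n => ?_, by
    simpa using hsx m⟩
  have e1 : f n ∘ bondMap f (Nat.le_add_left (n+1) m) =
      bondMap f ((Nat.le_succ n).trans (Nat.le_add_left (n+1) m)) := by
    rw [← bondMap_le_succ f, bondMap_comp]
  have e2 : bondMap f ((Nat.le_succ n).trans (Nat.le_add_left (n+1) m)) (s (n+1)) =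
      bondMap f (Nat.le_add_left n m) (f (m + n) (s (n+1))) := by
    rw [bondMap_succ f (Nat.le_add_left n m)]; rfl
  calc bondMap f (Nat.le_add_left n m) (s n)
      = bondMap f (Nat.le_add_left n m) (f (m + n) (s (n+1))) := by rw [hs n]
    _ = f n (bondMap f (Nat.le_add_left (n+1) m) (s (n+1))) := by
        rw [← e2, ← e1]; rfl

theorem stmt7
    {X Y : ℕ → Type*} [∀ n, MetricSpace (X n)] [∀ n, CompactSpace (X n)]
    [∀ n, MetricSpace (Y n)] [∀ n, CompactSpace (Y n)]
    (f : ∀ n, X (n + 1) → X n) (gs : ∀ n, Y (n + 1) → Y n)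
    (hfc : ∀ n, Continuous (f n)) (hfs : ∀ n, Surjective (f n))
    (hgc : ∀ n, Continuous (gs n)) (hgs : ∀ n, Surjective (gs n))
    (ns ms : ℕ → ℕ)
    (hms : ∀ k, ms k ≤ ms (k + 1)) (hns : ∀ k, ns k < ns (k + 1))
    (hnm : ∀ k, ns k ≤ ms k)
    (H : ∀ k, X (ms k) → Set (Y (ns k))) (hH : ∀ k, IsUSC (H k))
    (ha : ∀ k r : ℕ, k < r → ∀ (hnr : ns k ≤ ns r) (hmr : ms k ≤ ms r),
      ∀ j : ℕ, ∀ hj : j ≤ ns k, ∀ x : X (ms r),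
        bondMap gs (hj.trans hnr) '' H r x ⊆
          bondMap gs hj '' H k (bondMap f hmr x))
    (hb : ∀ j : ℕ, ∀ z : ↥(invLim X f),
      Tendsto (fun k =>
          diam (if hj : j ≤ ns k then
            bondMap gs hj '' H k (z.1 (ms k))
          else (∅ : Set (Y j))))
        atTop (nhds (0 : ℝ)))
    (hc : ∀ k, ∀ y : Y (ns k), ∃ x : X (ms k), y ∈ H k x) :
    ∃ g : ↥(invLim X f) → ↥(invLim Y gs), Continuous g ∧ Surjective g ∧
      ∀ k j : ℕ, ∀ hj : j ≤ ns k, ∀ z : ↥(invLim X f),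
        (g z).1 j ∈ bondMap gs hj '' H k (z.1 (ms k)) := by
  classical
  have hns' : StrictMono ns := strictMono_nat_of_lt_succ hns
  have hms' : Monotone ms := monotone_nat_of_le_succ hms
  have hjns : ∀ k, k ≤ ns k := fun k => hns'.le_apply
  have hAcomp : ∀ (k j : ℕ) (hj : j ≤ ns k) (x : X (ms k)),
      IsCompact (bondMap gs hj '' H k x) := fun k j hj x =>
    (((hH k).2.1 x).isCompact).image (bondMap_continuous gs hgc hj)
  have hGraph : ∀ (k j : ℕ) (hj : j ≤ ns k),
      IsClosed {p : X (ms k) × Y j | p.2 ∈ bondMap gs hj '' H k p.1} := by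
    intro k j hj
    have heq : {p : X (ms k) × Y j | p.2 ∈ bondMap gs hj '' H k p.1} =
        (fun p : X (ms k) × Y (ns k) => (p.1, bondMap gs hj p.2)) ''
          {p : X (ms k) × Y (ns k) | p.2 ∈ H k p.1} := by
      ext ⟨x, y⟩
      constructor
      · rintro ⟨y', hy', rfl⟩; exact ⟨(x, y'), hy', rfl⟩
      · rintro ⟨⟨x', y'⟩, hy', heq⟩
        simp only [Prod.mk.injEq] at heq
        obtain ⟨rfl, rfl⟩ := heq
        exact ⟨y', hy', rfl⟩
    rw [heq]
    exact (((hH k).2.2).isCompact.image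
      (continuous_fst.prodMk ((bondMap_continuous gs hgc hj).comp continuous_snd))).isClosed
  have hnested : ∀ (z : ↥(invLim X f)) (k r : ℕ) (hkr : k ≤ r) (j : ℕ) (hj : j ≤ ns k),
      bondMap gs (hj.trans (hns'.monotone hkr)) '' H r (z.1 (ms r)) ⊆
        bondMap gs hj '' H k (z.1 (ms k)) := by
    intro z k r hkr j hj
    rcases eq_or_lt_of_le hkr with rfl | hlt
    · exact subset_rfl
    · have h1 := ha k r hlt (hns'.monotone hkr) (hms' hkr) j hj (z.1 (ms r))
      rwa [← invLim_thread z.2 (hms' hkr)] at h1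
  have hexists : ∀ (z : ↥(invLim X f)) (j : ℕ), ∃ w : Y j,
      ∀ k (hj : j ≤ ns k), w ∈ bondMap gs hj '' H k (z.1 (ms k)) := by
    intro z j
    set D : ℕ → Set (Y j) := fun k =>
      bondMap gs ((Nat.le_add_right j k).trans (hjns (j + k))) ''
        H (j + k) (z.1 (ms (j + k))) with hD
    have hDne : (⋂ k, D k).Nonempty := by
      apply IsCompact.nonempty_iInter_of_sequence_nonempty_isCompact_isClosed
      · intro k
        exact hnested z (j + k) (j + (k + 1)) (by omega) j
          ((Nat.le_add_right j k).trans (hjns (j + k)))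
      · intro k
        exact ((hH (j + k)).1 _).image _
      · exact hAcomp _ _ _ _
      · intro k
        exact (hAcomp _ _ _ _).isClosed
    obtain ⟨w, hw⟩ := hDne
    rw [mem_iInter] at hw
    refine ⟨w, fun k hj => ?_⟩
    rcases le_total j k with hk | hk
    · obtain ⟨k', rfl⟩ : ∃ k', k = j + k' := ⟨k - j, by omega⟩
      exact hw k'
    · exact hnested z k j hk j hj (hw 0)
  choose yy hyy using hexists
  have huniq : ∀ (z : ↥(invLim X f)) (j : ℕ) (a b : Y j),
      (∀ᶠ k in atTop, ∀ hj : j ≤ ns k, a ∈ bondMap gs hj '' H k (z.1 (ms k))) →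
      (∀ᶠ k in atTop, ∀ hj : j ≤ ns k, b ∈ bondMap gs hj '' H k (z.1 (ms k))) →
      a = b := by
    intro z j a b hA hB
    have hdist : ∀ᶠ k in atTop, dist a b ≤
        diam (if hj : j ≤ ns k then bondMap gs hj '' H k (z.1 (ms k))
          else (∅ : Set (Y j))) := by
      filter_upwards [hA, hB, eventually_ge_atTop j] with k ha' hb' hk
      have hj : j ≤ ns k := hk.trans (hjns k)
      rw [dif_pos hj]
      exact dist_le_diam_of_mem (hAcomp k j hj _).isBounded (ha' hj) (hb' hj)
    exact dist_le_zero.mp (ge_of_tendsto (hb j z) hdist)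
  have hcons : ∀ z : ↥(invLim X f), (fun j => yy z j) ∈ invLim Y gs := by
    intro z j
    refine huniq z j (yy z j) (gs j (yy z (j + 1)))
      (Eventually.of_forall fun k hj => hyy z j k hj) ?_
    filter_upwards [eventually_ge_atTop (j + 1)] with k hk
    intro hj
    have hj1 : j + 1 ≤ ns k := hk.trans (hjns k)
    obtain ⟨y', hy', hyeq⟩ := hyy z (j + 1) k hj1
    refine ⟨y', hy', ?_⟩
    have hcomp : gs j ∘ bondMap gs hj1 = bondMap gs hj := by
      rw [← bondMap_le_succ gs, bondMap_comp]
    calc bondMap gs hj y' = gs j (bondMap gs hj1 y') := (congrFun hcomp y').symm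
      _ = gs j (yy z (j + 1)) := by rw [hyeq]
  refine ⟨fun z => ⟨fun j => yy z j, hcons z⟩, ?_, ?_, fun k j hj z => hyy z j k hj⟩
  · -- continuity
    apply continuous_iff_seqContinuous.mpr
    intro u z hu
    rw [tendsto_subtype_rng, tendsto_pi_nhds]
    intro j
    apply tendsto_of_subseq_tendsto
    intro φ hφ
    obtain ⟨w, -, ψ, hψ, hw⟩ := isCompact_univ.tendsto_subseq
      (x := fun i => yy (u (φ i)) j) (fun i => mem_univ _)
    refine ⟨ψ, ?_⟩
    have hzw : w = yy z j := by
      refine (huniq z j (yy z j) w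
        (Eventually.of_forall fun k hj => hyy z j k hj) ?_).symm
      refine Eventually.of_forall fun k hj => ?_
      have htend : Tendsto (fun n => ((u (φ (ψ n))).1 (ms k), yy (u (φ (ψ n))) j))
          atTop (nhds (z.1 (ms k), w)) := by
        apply Tendsto.prodMk_nhds
        · exact (((continuous_apply (ms k)).comp
            continuous_subtype_val).continuousAt.tendsto.comp hu).comp
            (hφ.comp hψ.tendsto_atTop)
        · exact hw
      exact (hGraph k j hj).mem_of_tendsto htend
        (Eventually.of_forall fun n => hyy (u (φ (ψ n))) j k hj)
    show Tendsto ((fun i => yy (u (φ i)) j) ∘ ψ) atTop (nhds (yy z j))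
    rw [← hzw]
    exact hw
  · -- surjectivity
    have hclosed : IsClosed (invLim X f) := by
      have heq : invLim X f = ⋂ n, {x : ∀ n, X n | x n = f n (x (n + 1))} := by
        ext x; simp [invLim, Set.mem_iInter]
      rw [heq]
      exact isClosed_iInter fun n =>
        isClosed_eq (continuous_apply n) ((hfc n).comp (continuous_apply (n + 1)))
    haveI : CompactSpace ↥(invLim X f) := isCompact_iff_compactSpace.mp hclosed.isCompact
    intro w
    choose xx hxx using fun k => hc k (w.1 (ns k))
    choose zz hzz1 hzz2 using fun k => invLim_proj_surj f hfs (ms k) (xx k)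
    obtain ⟨z, -, φ, hφ, hZ⟩ := isCompact_univ.tendsto_subseq
      (x := fun k => (⟨zz k, hzz1 k⟩ : ↥(invLim X f))) (fun k => mem_univ _)
    refine ⟨z, Subtype.ext (funext fun j => ?_)⟩
    refine huniq z j (yy z j) (w.1 j)
      (Eventually.of_forall fun k hj => hyy z j k hj) ?_
    refine Eventually.of_forall fun k hj => ?_
    have htend : Tendsto (fun i => ((zz (φ i)) (ms k), w.1 j))
        atTop (nhds (z.1 (ms k), w.1 j)) := by
      apply Tendsto.prodMk_nhds
      · exact (((continuous_apply (ms k)).comp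
          continuous_subtype_val).continuousAt.tendsto.comp hZ)
      · exact tendsto_const_nhds
    apply (hGraph k j hj).mem_of_tendsto htend
    filter_upwards [eventually_ge_atTop (k + 1)] with i hi
    have hki : k < φ i := lt_of_lt_of_le (by omega) (hφ.le_apply)
    have hmem : w.1 j ∈ bondMap gs (hj.trans (hns'.monotone hki.le)) ''
        H (φ i) ((zz (φ i)) (ms (φ i))) := by
      rw [hzz2]
      exact ⟨w.1 (ns (φ i)), hxx (φ i), (invLim_thread w.2 _).symm⟩
    exact hnested ⟨zz (φ i), hzz1 (φ i)⟩ k (φ i) hki.le j hj hmem
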